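/- Let T be a finite tree with p ≥ 3 vertices, q = p − 1 edges and bipartition (X, Y). If T admits a set-ordered graceful labelling with respect to (X, Y), then there exists a bijection g : V(T) → {1, 2, …, p} such that the residues (g(u) + g(v)) mod (p − 1), over all p − 1 edges uv of T, are pairwise distinct. -/
import Mathlib


/-- The induced edge label `|f u - f v|` for a vertex labelling `f`. -/
def elabel {V : Type*} (f : V → ℕ) (u v : V) : ℕ :=
  max (f u) (f v) - min (f u) (f v)

/-- `(X, Y)` is a bipartition of the graph `G`: the two parts cover all vertices,
are disjoint, and every edge joins a vertex of `X` to a vertex of `Y`. -/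
def IsBipartitionOf {V : Type*} (G : SimpleGraph V) (X Y : Finset V) : Prop :=
  (∀ v : V, v ∈ X ∨ v ∈ Y) ∧ (∀ v : V, ¬(v ∈ X ∧ v ∈ Y)) ∧
    ∀ ⦃u v : V⦄, G.Adj u v → (u ∈ X ∧ v ∈ Y) ∨ (u ∈ Y ∧ v ∈ X)

/-- `f` is a set-ordered graceful labelling of `G` (with `q` edges) with respect to the
bipartition `(X, Y)`: `f` is injective into `{0,…,q}`, the induced edge labels
`|f u - f v|` are pairwise distinct and form exactly `{1,…,q}`, and every label on `X`
is smaller than every label on `Y`. -/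
def IsSetOrderedGraceful {V : Type*} (G : SimpleGraph V) (X Y : Finset V) (q : ℕ)
    (f : V → ℕ) : Prop :=
  Function.Injective f ∧ (∀ v : V, f v ≤ q) ∧
    (∀ u v u' v' : V, G.Adj u v → G.Adj u' v' →
      elabel f u v = elabel f u' v' → s(u, v) = s(u', v')) ∧
    (∀ u v : V, G.Adj u v → 1 ≤ elabel f u v ∧ elabel f u v ≤ q) ∧
    (∀ m : ℕ, 1 ≤ m → m ≤ q → ∃ u v : V, G.Adj u v ∧ elabel f u v = m) ∧
    (∀ x ∈ X, ∀ y ∈ Y, f x < f y)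

/-- `f` is a set-ordered odd-graceful labelling of `G` (with `q` edges) with respect to
the bipartition `(X, Y)`: `f` is injective into `{0,…,2q-1}`, the induced edge labels
`|f u - f v|` are pairwise distinct and form exactly the odd numbers `{1,3,…,2q-1}`,
and every label on `X` is smaller than every label on `Y`. -/
def IsSetOrderedOddGraceful {V : Type*} (G : SimpleGraph V) (X Y : Finset V) (q : ℕ)
    (f : V → ℕ) : Prop :=
  Function.Injective f ∧ (∀ v : V, f v ≤ 2 * q - 1) ∧
    (∀ u v u' v' : V, G.Adj u v → G.Adj u' v' →
      elabel f u v = elabel f u' v' → s(u, v) = s(u', v')) ∧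
    (∀ u v : V, G.Adj u v → Odd (elabel f u v) ∧ elabel f u v ≤ 2 * q - 1) ∧
    (∀ m : ℕ, Odd m → m ≤ 2 * q - 1 → ∃ u v : V, G.Adj u v ∧ elabel f u v = m) ∧
    (∀ x ∈ X, ∀ y ∈ Y, f x < f y)

/-- If a finite tree with `p ≥ 3` vertices and `q = p - 1` edges admits a set-ordered
graceful labelling with respect to a bipartition `(X, Y)`, then there is a bijection
`g : V(T) → {1,…,p}` whose edge residues `(g u + g v) mod (p - 1)` are pairwise
distinct over the edges. -/
theorem setOrderedGraceful_harmonious {V : Type*} [Fintype V] [DecidableEq V]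
    (G : SimpleGraph V) (hT : G.IsTree)
    (p : ℕ) (hp : Fintype.card V = p) (hp3 : 3 ≤ p)
    (X Y : Finset V) (hbip : IsBipartitionOf G X Y)
    (f : V → ℕ) (hf : IsSetOrderedGraceful G X Y (p - 1) f) :
    ∃ g : V → ℕ,
      Function.Injective g ∧ (∀ v : V, 1 ≤ g v ∧ g v ≤ p) ∧
      (∀ m : ℕ, 1 ≤ m → m ≤ p → ∃ v : V, g v = m) ∧
      (∀ u v u' v' : V, G.Adj u v → G.Adj u' v' →
        (g u + g v) % (p - 1) = (g u' + g v') % (p - 1) → s(u, v) = s(u', v')) := by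
  obtain ⟨hinj, hle, helinj, helrange, helsurj, ford⟩ := hf
  obtain ⟨hcov, hdisj, hedge⟩ := hbip
  set q := p - 1 with hq
  have hq2 : 2 ≤ q := by omega
  have hpq : p = q + 1 := by omega
  -- X is nonempty
  obtain ⟨u0, v0, hadj0, -⟩ := helsurj 1 le_rfl (by omega)
  have hXne : X.Nonempty := by
    rcases hedge hadj0 with ⟨h1, h2⟩ | ⟨h1, h2⟩
    exacts [⟨u0, h1⟩, ⟨v0, h2⟩]
  set s := X.sup f with hs
  obtain ⟨x0, hx0X, hx0⟩ := Finset.exists_mem_eq_sup X hXne f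
  have hmemX : ∀ x ∈ X, f x ≤ s := fun x hx => Finset.le_sup hx
  have hmemY : ∀ y ∈ Y, s < f y := by
    intro y hy
    rw [hs, hx0]
    exact ford x0 hx0X y hy
  have hsq : s ≤ q := by rw [hs, hx0]; exact hle x0
  -- the new labelling
  set g : V → ℕ := fun v => if v ∈ X then s + 1 - f v else f v + 1 with hg
  have hgX : ∀ x ∈ X, g x = s + 1 - f x := fun x hx => if_pos hx
  have hgY : ∀ y ∈ Y, g y = f y + 1 := by
    intro y hy
    have : y ∉ X := fun h => hdisj y ⟨h, hy⟩
    exact if_neg this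
  have hginj : Function.Injective g := by
    intro a b hab
    rcases hcov a with ha | ha <;> rcases hcov b with hb | hb
    · rw [hgX a ha, hgX b hb] at hab
      have h1 := hmemX a ha; have h2 := hmemX b hb
      exact hinj (by omega)
    · rw [hgX a ha, hgY b hb] at hab
      have h1 := hmemX a ha; have h2 := hmemY b hb
      omega
    · rw [hgY a ha, hgX b hb] at hab
      have h1 := hmemY a ha; have h2 := hmemX b hb
      omega
    · rw [hgY a ha, hgY b hb] at hab
      exact hinj (by omega)
  have hgbound : ∀ v : V, 1 ≤ g v ∧ g v ≤ p := by
    intro v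
    rcases hcov v with hv | hv
    · rw [hgX v hv]; have := hmemX v hv; omega
    · rw [hgY v hv]; have h1 := hmemY v hv; have h2 := hle v; omega
  have hsurj : ∀ m : ℕ, 1 ≤ m → m ≤ p → ∃ v : V, g v = m := by
    intro m h1 h2
    have hsub : Finset.image g Finset.univ ⊆ Finset.Icc 1 p := by
      intro x hx
      simp only [Finset.mem_image] at hx
      obtain ⟨v, -, rfl⟩ := hx
      exact Finset.mem_Icc.2 (hgbound v)
    have hcard : (Finset.Icc 1 p).card ≤ (Finset.image g Finset.univ).card := by
      rw [Finset.card_image_of_injective _ hginj, Finset.card_univ, hp,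
        Nat.card_Icc]
      omega
    have := Finset.eq_of_subset_of_card_le hsub hcard
    have hm : m ∈ Finset.image g Finset.univ := by
      rw [this]; exact Finset.mem_Icc.2 ⟨h1, h2⟩
    simp only [Finset.mem_image] at hm
    obtain ⟨v, -, hv⟩ := hm
    exact ⟨v, hv⟩
  -- edge sums
  have hsum : ∀ u v : V, G.Adj u v → g u + g v = s + 2 + elabel f u v := by
    intro u v huv
    rcases hedge huv with ⟨hu, hv⟩ | ⟨hu, hv⟩
    · have hlt : f u < f v := ford u hu v hv
      have h1 := hmemX u hu
      rw [hgX u hu, hgY v hv]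
      simp only [elabel]
      omega
    · have hlt : f v < f u := ford v hv u hu
      have h1 := hmemX v hv
      rw [hgY u hu, hgX v hv]
      simp only [elabel]
      omega
  refine ⟨g, hginj, hgbound, hsurj, ?_⟩
  intro u v u' v' huv huv' hmod
  rw [hsum u v huv, hsum u' v' huv'] at hmod
  obtain ⟨he1, he2⟩ := helrange u v huv
  obtain ⟨he1', he2'⟩ := helrange u' v' huv'
  apply helinj u v u' v' huv huv'
  set e := elabel f u v
  set e' := elabel f u' v'
  have hmod' : e % q = e' % q := Nat.ModEq.add_left_cancel' (s + 2) hmod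
  rcases lt_or_eq_of_le he2 with h | h <;> rcases lt_or_eq_of_le he2' with h' | h'
  · rw [Nat.mod_eq_of_lt h, Nat.mod_eq_of_lt h'] at hmod'
    exact hmod'
  · rw [Nat.mod_eq_of_lt h, h', Nat.mod_self] at hmod'
    omega
  · rw [h, Nat.mod_self, Nat.mod_eq_of_lt h'] at hmod'
    omega
  · rw [h, h']
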